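/- Let u and v be nonempty strings with u^ω ≠ v^ω. Then the length of the longest common prefix of u^ω and v^ω is strictly less than |u| + |v| - gcd(|u|,|v|); in particular, u^ω = v^ω if and only if their prefixes of length |u| + |v| coincide. -/

import Mathlib

/-- `k`-fold concatenation of the string `x` with itself. -/
def listPow {α : Type*} (x : List α) (k : ℕ) : List α := (List.replicate k x).flatten

/-- The omega extension `u^ω = u·u·u···` of a nonempty string `u`,
as an infinite string (function on positions, 0-indexed). -/
def omegaExt {α : Type*} [Inhabited α] (u : List α) (i : ℕ) : α :=
  u.getD (i % u.length) default

/-- Fine–Wilf: a word of length `p + q - gcd p q` with periods `p` and `q`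
has period `gcd p q` (stated as: positions congruent mod the gcd agree). -/
lemma fineWilf_aux {α : Type*} : ∀ N p q, 0 < p → 0 < q → p + q ≤ N →
    ∀ w : ℕ → α,
    (∀ i, i + p < p + q - Nat.gcd p q → w (i + p) = w i) →
    (∀ i, i + q < p + q - Nat.gcd p q → w (i + q) = w i) →
    ∀ i j, i < p + q - Nat.gcd p q → j < p + q - Nat.gcd p q →
      i % Nat.gcd p q = j % Nat.gcd p q → w i = w j := by
  intro N
  induction N with
  | zero => intro p q hp hq hN; exact absurd hN (by simp only [Nat.zero_eq]; omega)
  | succ N ih =>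
    have key : ∀ p q, 0 < p → 0 < q → p < q → p + q ≤ N + 1 →
        ∀ w : ℕ → α,
        (∀ i, i + p < p + q - Nat.gcd p q → w (i + p) = w i) →
        (∀ i, i + q < p + q - Nat.gcd p q → w (i + q) = w i) →
        ∀ i j, i < p + q - Nat.gcd p q → j < p + q - Nat.gcd p q →
          i % Nat.gcd p q = j % Nat.gcd p q → w i = w j := by
      intro p q hp hq hpq hN w h1 h2 i j hi hj hij
      set d := Nat.gcd p q with hd
      have hdp : d ∣ p := Nat.gcd_dvd_left p q
      have hdq : d ∣ q := Nat.gcd_dvd_right p q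
      have hdpos : 0 < d := Nat.gcd_pos_of_pos_left q hp
      have hdlep : d ≤ p := Nat.le_of_dvd hp hdp
      -- q - p ≥ d since d ∣ q - p and q - p > 0
      have hdvd : d ∣ q - p := (Nat.dvd_sub hdq hdp)
      have hqp : d ≤ q - p := Nat.le_of_dvd (by omega) hdvd
      have hgcd' : Nat.gcd p (q - p) = d := Nat.gcd_sub_self_right (le_of_lt hpq)
      -- hypotheses for the smaller instance (p, q - p)
      have h1' : ∀ i, i + p < p + (q - p) - Nat.gcd p (q - p) → w (i + p) = w i := by
        intro i hi'
        exact h1 i (by omega)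
      have h2' : ∀ i, i + (q - p) < p + (q - p) - Nat.gcd p (q - p) → w (i + (q - p)) = w i := by
        intro i hi'
        rw [hgcd'] at hi'
        have e1 : w (i + (q - p) + p) = w (i + (q - p)) := h1 _ (by omega)
        have e2 : i + (q - p) + p = i + q := by omega
        have e3 : w (i + q) = w i := h2 i (by omega)
        rw [e2, e3] at e1
        exact e1.symm
      -- reduce an index below p + (q-p) - d using period p
      have reduce : ∀ k, k < p + q - d → ∃ k', k' < p + (q - p) - d ∧ k' % d = k % d ∧ w k = w k' := by
        intro k hk
        by_cases hcase : k < p + (q - p) - d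
        · exact ⟨k, hcase, rfl, rfl⟩
        · have hkp : p ≤ k := by omega
          refine ⟨k - p, by omega, ?_, ?_⟩
          · have hmod : (k - p) % d = k % d :=
              (Nat.modEq_iff_dvd' (Nat.sub_le k p)).mpr
                (by rw [Nat.sub_sub_self hkp]; exact hdp)
            exact hmod
          · have e0 : w (k - p + p) = w (k - p) := h1 (k - p) (by omega)
            have e : k - p + p = k := by omega
            rw [e] at e0
            exact e0
      obtain ⟨i', hi'1, hi'2, hi'3⟩ := reduce i hi
      obtain ⟨j', hj'1, hj'2, hj'3⟩ := reduce j hj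
      rw [hi'3, hj'3]
      exact ih p (q - p) hp (by omega) (by omega) w h1' h2' i' j'
        (by rw [hgcd']; exact hi'1) (by rw [hgcd']; exact hj'1)
        (by rw [hgcd', hi'2, hj'2]; exact hij)
    intro p q hp hq hN w h1 h2 i j hi hj hij
    rcases lt_trichotomy p q with hlt | heq | hgt
    · exact key p q hp hq hlt hN w h1 h2 i j hi hj hij
    · subst heq
      have hg : Nat.gcd p p = p := Nat.gcd_self p
      rw [hg] at hi hj hij
      have : i = j := by
        rw [Nat.mod_eq_of_lt (by omega), Nat.mod_eq_of_lt (by omega)] at hij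
        exact hij
      rw [this]
    · have hg : Nat.gcd q p = Nat.gcd p q := Nat.gcd_comm q p
      exact key q p hq hp hgt (by omega) w (by rw [hg]; intro i hi; exact h2 i (by omega))
        (by rw [hg]; intro i hi; exact h1 i (by omega)) i j (by omega) (by omega) (by rw [hg]; exact hij)

/-- If `u^ω ≠ v^ω` then `lcp(u^ω, v^ω) < |u| + |v| - gcd(|u|,|v|)`; in particular
`u^ω = v^ω` iff the prefixes of length `|u| + |v|` coincide. -/
theorem omega_lcp_bound {α : Type*} [Inhabited α] (u v : List α)
    (hu : u ≠ []) (hv : v ≠ [])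
    (hne : (fun i => omegaExt u i) ≠ (fun i => omegaExt v i)) :
    (∃ i, i < u.length + v.length - Nat.gcd u.length v.length ∧
      omegaExt u i ≠ omegaExt v i) ∧
    ((∀ i, omegaExt u i = omegaExt v i) ↔
      ∀ i < u.length + v.length, omegaExt u i = omegaExt v i) := by
  set p := u.length with hp'
  set q := v.length with hq'
  have hp : 0 < p := List.length_pos_iff.mpr hu
  have hq : 0 < q := List.length_pos_iff.mpr hv
  set d := Nat.gcd p q with hd'
  have hdp : d ∣ p := Nat.gcd_dvd_left p q
  have hdq : d ∣ q := Nat.gcd_dvd_right p q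
  have hdpos : 0 < d := Nat.gcd_pos_of_pos_left q hp
  have hdlep : d ≤ p := Nat.le_of_dvd hp hdp
  have hdleq : d ≤ q := Nat.le_of_dvd hq hdq
  set n := p + q - d with hn'
  -- periodicity of omegaExt
  have fper : ∀ i, omegaExt u (i + p) = omegaExt u i := by
    intro i; unfold omegaExt; rw [← hp', Nat.add_mod_right]
  have gper : ∀ i, omegaExt v (i + q) = omegaExt v i := by
    intro i; unfold omegaExt; rw [← hq', Nat.add_mod_right]
  have fmod : ∀ i, omegaExt u (i % p) = omegaExt u i := by
    intro i; unfold omegaExt; rw [← hp', Nat.mod_mod_of_dvd _ dvd_rfl]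
  have gmod : ∀ i, omegaExt v (i % q) = omegaExt v i := by
    intro i; unfold omegaExt; rw [← hq', Nat.mod_mod_of_dvd _ dvd_rfl]
  -- the key: agreement on [0, n) implies agreement everywhere
  have main : (∀ i < n, omegaExt u i = omegaExt v i) → ∀ i, omegaExt u i = omegaExt v i := by
    intro hag
    set w : ℕ → α := fun i => omegaExt u i with hw
    have h1 : ∀ i, i + p < n → w (i + p) = w i := fun i _ => fper i
    have h2 : ∀ i, i + q < n → w (i + q) = w i := by
      intro i hi
      have e1 : w (i + q) = omegaExt v (i + q) := hag _ hi
      have e2 : omegaExt v (i + q) = omegaExt v i := gper i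
      have e3 : omegaExt v i = w i := (hag i (by omega)).symm
      rw [e1, e2, e3]
    have fw := fineWilf_aux (p + q) p q hp hq le_rfl w h1 h2
    have wmod : ∀ i < n, w i = w (i % d) := by
      intro i hi
      exact fw i (i % d) hi (by have := Nat.mod_lt i hdpos; omega)
        (by rw [Nat.mod_mod_of_dvd _ dvd_rfl])
    intro i
    have e1 : omegaExt u i = w (i % d) := by
      rw [← fmod i]
      have : w (i % p) = w (i % p % d) := wmod (i % p) (by have := Nat.mod_lt i hp; omega)
      rw [Nat.mod_mod_of_dvd _ hdp] at this
      exact this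
    have e2 : omegaExt v i = w (i % d) := by
      rw [← gmod i]
      have hq1 : i % q < n := by have := Nat.mod_lt i hq; omega
      have e3 : omegaExt v (i % q) = w (i % q) := (hag _ hq1).symm
      rw [e3]
      have : w (i % q) = w (i % q % d) := wmod (i % q) hq1
      rw [Nat.mod_mod_of_dvd _ hdq] at this
      exact this
    rw [e1, e2]
  constructor
  · by_contra hcon
    push_neg at hcon
    exact hne (funext (main hcon))
  · constructor
    · intro h i _; exact h i
    · intro h
      exact main (fun i hi => h i (by omega))
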